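/- For any x ∈ B_n, the strings M(x) and N(x) are distinct elements of B_n', each obtained from x by flipping a single 0-bit to a 1-bit. -/
import Mathlib


/-- Hamming weight. -/
def wt {m : ℕ} (x : Fin m → Bool) : ℕ :=
  (Finset.univ.filter (fun i => x i = true)).card

/-- Surplus of zeros over ones in the prefix of `x` ending at position `j`. -/
def surplus {m : ℕ} (x : Fin m → Bool) (j : Fin m) : ℤ :=
  ((Finset.univ.filter (fun i => i ≤ j ∧ x i = false)).card : ℤ) -
  ((Finset.univ.filter (fun i => i ≤ j ∧ x i = true)).card : ℤ)

/-- Sorting key for the prefixes ending in 0 (i.e. for positions `j` with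
`x j = false`): decreasing surplus of zeros over ones, ties broken by
increasing prefix length.  A smaller key means earlier in the total order. -/
def key {m : ℕ} (x : Fin m → Bool) (j : Fin m) : Lex (ℤ × ℕ) :=
  toLex (-(surplus x j), (j : ℕ))

/-- Flip the bit of `x` at position `j`. -/
def flipBit {m : ℕ} (x : Fin m → Bool) (j : Fin m) : Fin m → Bool :=
  Function.update x j (!(x j))

/-- `IsN x y` : `y` is obtained from `x` by flipping the last bit of the
*first* prefix ending in 0 in the lexical total order. -/
def IsN {m : ℕ} (x y : Fin m → Bool) : Prop :=
  ∃ j, x j = false ∧ (∀ j', x j' = false → j' ≠ j → key x j < key x j') ∧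
    y = flipBit x j

/-- `IsM x y` : `y` is obtained from `x` by flipping the last bit of the
*second* prefix ending in 0 in the lexical total order. -/
def IsM {m : ℕ} (x y : Fin m → Bool) : Prop :=
  ∃ j₀ j, x j₀ = false ∧ x j = false ∧ j ≠ j₀ ∧
    (∀ j', x j' = false → j' ≠ j₀ → key x j₀ < key x j') ∧
    (∀ j', x j' = false → j' ≠ j₀ → j' ≠ j → key x j < key x j') ∧
    y = flipBit x j

/-- `B_n` : bitstrings of length `2n+1` with exactly `n` ones. -/
def Bn (n : ℕ) : Set (Fin (2 * n + 1) → Bool) := {x | wt x = n}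

/-- `B_n'` : bitstrings of length `2n+1` with exactly `n+1` ones. -/
def Bn' (n : ℕ) : Set (Fin (2 * n + 1) → Bool) := {x | wt x = n + 1}


lemma wt_flip {m : ℕ} (x : Fin m → Bool) (j : Fin m) (hj : x j = false) :
    wt (flipBit x j) = wt x + 1 := by
  unfold wt flipBit
  have : (Finset.univ.filter (fun i => Function.update x j (!(x j)) i = true))
      = insert j (Finset.univ.filter (fun i => x i = true)) := by
    ext i
    by_cases h : i = j
    · subst h; simp [Function.update_self, hj]
    · simp [Function.update_of_ne h, h]
  rw [this, Finset.card_insert_of_notMem (by simp [hj])]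

lemma zeros_card {m : ℕ} (x : Fin m → Bool) :
    (Finset.univ.filter (fun i => x i = false)).card + wt x = m := by
  unfold wt
  have := Finset.card_filter_add_card_filter_not
    (s := (Finset.univ : Finset (Fin m))) (p := fun i => x i = false)
  simpa [Bool.not_eq_false] using this

lemma key_inj {m : ℕ} (x : Fin m → Bool) {a b : Fin m}
    (h : key x a = key x b) : a = b := by
  unfold key at h
  have := congrArg (fun p => (ofLex p).2) h
  simpa [Fin.val_injective.eq_iff] using this

/-- For any `x ∈ B_n`, the strings `M(x)` and `N(x)` exist, are distinct
elements of `B_n'`, and each is obtained from `x` by flipping a single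
0-bit to a 1-bit. -/
theorem M_N_wellDefined (n : ℕ) (hn : 1 ≤ n) (x : Fin (2 * n + 1) → Bool)
    (hx : x ∈ Bn n) :
    ∃ y z, IsM x y ∧ IsN x z ∧ y ≠ z ∧ y ∈ Bn' n ∧ z ∈ Bn' n ∧
      (∃ j, x j = false ∧ y = flipBit x j) ∧
      (∃ j, x j = false ∧ z = flipBit x j) := by
  classical
  set S := Finset.univ.filter (fun i => x i = false) with hSdef
  have hcard : S.card = n + 1 := by
    have h := zeros_card x
    rw [← hSdef] at h
    have hw : wt x = n := hx
    omega
  have hS : S.Nonempty := Finset.card_pos.mp (by omega)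
  obtain ⟨j₀, hj₀S, hmin⟩ := S.exists_min_image (key x) hS
  have hS' : (S.erase j₀).Nonempty := by
    apply Finset.card_pos.mp
    rw [Finset.card_erase_of_mem hj₀S]
    omega
  obtain ⟨j, hjS', hmin'⟩ := (S.erase j₀).exists_min_image (key x) hS'
  have hjne : j ≠ j₀ := (Finset.mem_erase.mp hjS').1
  have hjS : j ∈ S := (Finset.mem_erase.mp hjS').2
  have hxj₀ : x j₀ = false := by simpa [hSdef] using hj₀S
  have hxj : x j = false := by simpa [hSdef] using hjS
  have hmin₀ : ∀ j', x j' = false → j' ≠ j₀ → key x j₀ < key x j' := by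
    intro j' h1 h2
    refine lt_of_le_of_ne (hmin j' (by simp [hSdef, h1])) ?_
    exact fun h => h2 (key_inj x h.symm)
  have hmin₁ : ∀ j', x j' = false → j' ≠ j₀ → j' ≠ j → key x j < key x j' := by
    intro j' h1 h2 h3
    refine lt_of_le_of_ne (hmin' j' (Finset.mem_erase.mpr ⟨h2, by simp [hSdef, h1]⟩)) ?_
    exact fun h => h3 (key_inj x h.symm)
  refine ⟨flipBit x j, flipBit x j₀,
    ⟨j₀, j, hxj₀, hxj, hjne, hmin₀, hmin₁, rfl⟩,
    ⟨j₀, hxj₀, hmin₀, rfl⟩, ?_, ?_, ?_,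
    ⟨j, hxj, rfl⟩, ⟨j₀, hxj₀, rfl⟩⟩
  · intro h
    have := congrFun h j₀
    simp [flipBit, Function.update_of_ne (Ne.symm hjne), hxj₀] at this
  · show wt _ = n + 1
    rw [wt_flip x j hxj, hx]
  · show wt _ = n + 1
    rw [wt_flip x j₀ hxj₀, hx]
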